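/- A nontrivial finite-dimensional nilpotent real Jordan algebra N admits no Jordan-Einstein metric: there is no inner product ⟨·,·⟩ on N and constant c ∈ ℝ such that Ric = c⟨·,·⟩, where Ric(X,Y) = ⟨MX,Y⟩ − ¼⟨H,XY⟩ with ⟨MX,Y⟩ = −½Σ_{i,j}⟨XE_i,E_j⟩⟨YE_i,E_j⟩ + ¼Σ_{i,j}⟨E_iE_j,X⟩⟨E_iE_j,Y⟩ and H = Σ_i E_i² for an orthonormal basis {E_i}. -/
import Mathlib


open RealInnerProductSpace

/-- The descending power series A⁰ = A, A^{k+1} = A·A^k of a (Jordan) algebra. -/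
def jordanPow {V : Type*} [AddCommGroup V] [Module ℝ V]
    (mul : V →ₗ[ℝ] V →ₗ[ℝ] V) : ℕ → Submodule ℝ V
  | 0 => ⊤
  | (k + 1) => Submodule.span ℝ {z | ∃ x y, y ∈ jordanPow mul k ∧ z = mul x y}

/-- A nontrivial nilpotent Jordan algebra admits no
Jordan-Einstein metric: for every inner product (with orthonormal basis {E_i})
and every constant c, the Ricci tensor Ric(X,Y) = ⟨MX,Y⟩ − ¼⟨H,XY⟩ is not
equal to c⟨·,·⟩. -/
theorem nilpotent_no_einstein
    {V : Type*} [NormedAddCommGroup V] [InnerProductSpace ℝ V] [FiniteDimensional ℝ V]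
    {ι : Type*} [Fintype ι]
    (mul : V →ₗ[ℝ] V →ₗ[ℝ] V)
    (comm : ∀ X Y : V, mul X Y = mul Y X)
    (jordan : ∀ X Y : V, mul X (mul (mul X X) Y) = mul (mul X X) (mul X Y))
    (hnil : ∃ m : ℕ, jordanPow mul m = ⊥)
    (nontrivial : ∃ X Y : V, mul X Y ≠ 0)
    (b : OrthonormalBasis ι ℝ V)
    (M : V →ₗ[ℝ] V)
    (hM : ∀ X Y : V, ⟪M X, Y⟫ =
      -(1/2) * ∑ i, ∑ j, ⟪mul X (b i), b j⟫ * ⟪mul Y (b i), b j⟫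
      + (1/4) * ∑ i, ∑ j, ⟪mul (b i) (b j), X⟫ * ⟪mul (b i) (b j), Y⟫)
    (H : V) (hH : H = ∑ i, mul (b i) (b i))
    (c : ℝ) :
    ¬ (∀ X Y : V, ⟪M X, Y⟫ - (1/4) * ⟪H, mul X Y⟫ = c * ⟪X, Y⟫) := by
  intro heq
  obtain ⟨X₀, Y₀, hXY⟩ := nontrivial
  -- Step 0: some product of basis vectors is nonzero
  have hbasis : ∃ i j, mul (b i) (b j) ≠ 0 := by
    by_contra h
    push_neg at h
    apply hXY
    have hX := b.sum_repr' X₀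
    have hY := b.sum_repr' Y₀
    rw [← hX, ← hY]
    simp [map_sum, map_smul, h]
  -- Step 1: annihilator element
  have hVne : (⊤ : Submodule ℝ V) ≠ ⊥ := by
    intro h
    exact hXY (by
      have : Y₀ ∈ (⊥ : Submodule ℝ V) := h ▸ Submodule.mem_top
      rw [Submodule.mem_bot] at this
      simp [this])
  have hann : ∃ Z : V, Z ≠ 0 ∧ ∀ x : V, mul x Z = 0 := by
    classical
    have hm := Nat.find_spec hnil
    set m := Nat.find hnil with hmdef
    have hm0 : m ≠ 0 := by
      intro h
      rw [h] at hm
      exact hVne hm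
    obtain ⟨k, hk⟩ := Nat.exists_eq_succ_of_ne_zero hm0
    have hkne : jordanPow mul k ≠ ⊥ := by
      apply Nat.find_min hnil
      omega
    obtain ⟨Z, hZmem, hZne⟩ := (Submodule.ne_bot_iff _).mp hkne
    refine ⟨Z, hZne, fun x => ?_⟩
    have : mul x Z ∈ jordanPow mul (k + 1) :=
      Submodule.subset_span ⟨x, Z, hZmem, rfl⟩
    rw [show k + 1 = m from hk.symm, hm] at this
    exact (Submodule.mem_bot ℝ).mp this
  obtain ⟨Z, hZne, hZ⟩ := hann
  -- Step 2: c ≥ 0 from Ric(Z,Z) ≥ 0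
  have hZZ : mul Z Z = 0 := hZ Z
  have hMZZ : ⟪M Z, Z⟫ = (1/4) * ∑ i, ∑ j, ⟪mul (b i) (b j), Z⟫ * ⟪mul (b i) (b j), Z⟫ := by
    rw [hM]
    have h1 : ∀ i : ι, mul Z (b i) = 0 := fun i => (comm Z (b i)).trans (hZ (b i))
    simp [h1]
  have hc0 : 0 ≤ c := by
    have h := heq Z Z
    rw [hZZ, hMZZ] at h
    simp only [inner_zero_right, mul_zero, sub_zero] at h
    have hpos : 0 < ⟪Z, Z⟫ :=
      lt_of_le_of_ne real_inner_self_nonneg (Ne.symm (inner_self_ne_zero.mpr hZne))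
    have hnonneg : 0 ≤ (1/4 : ℝ) * ∑ i, ∑ j, ⟪mul (b i) (b j), Z⟫ * ⟪mul (b i) (b j), Z⟫ := by
      have : 0 ≤ ∑ i, ∑ j, ⟪mul (b i) (b j), Z⟫ * ⟪mul (b i) (b j), Z⟫ :=
        Finset.sum_nonneg fun i _ => Finset.sum_nonneg fun j _ => mul_self_nonneg _
      linarith
    nlinarith
  -- Step 3: trace is negative, hence c < 0
  set S : ℝ := ∑ i, ∑ j, ⟪mul (b i) (b j), mul (b i) (b j)⟫ with hSdef
  have hSpos : 0 < S := by
    obtain ⟨i₀, j₀, hij⟩ := hbasis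
    have hterm : ∀ i j : ι, 0 ≤ ⟪mul (b i) (b j), mul (b i) (b j)⟫ :=
      fun i j => real_inner_self_nonneg
    have hpos : 0 < ⟪mul (b i₀) (b j₀), mul (b i₀) (b j₀)⟫ :=
      lt_of_le_of_ne real_inner_self_nonneg (Ne.symm (inner_self_ne_zero.mpr hij))
    calc 0 < ⟪mul (b i₀) (b j₀), mul (b i₀) (b j₀)⟫ := hpos
    _ ≤ ∑ j, ⟪mul (b i₀) (b j), mul (b i₀) (b j)⟫ :=
        Finset.single_le_sum (fun j _ => hterm i₀ j) (Finset.mem_univ j₀)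
    _ ≤ S := Finset.single_le_sum
        (fun i _ => Finset.sum_nonneg (fun j _ => hterm i j)) (Finset.mem_univ i₀)
  -- Parseval: sum over k of ⟪v, b k⟫² = ⟪v, v⟫
  have parseval : ∀ v : V, ∑ k, ⟪v, b k⟫ * ⟪v, b k⟫ = ⟪v, v⟫ := by
    intro v
    have := b.sum_inner_mul_inner v v
    simpa [real_inner_comm] using this
  -- trace of M
  have htrM : ∑ k, ⟪M (b k), b k⟫ = -(1/4) * S := by
    have hT1 : ∑ k, ∑ i, ∑ j, ⟪mul (b k) (b i), b j⟫ * ⟪mul (b k) (b i), b j⟫ = S := by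
      rw [hSdef]
      exact Finset.sum_congr rfl fun k _ => Finset.sum_congr rfl fun i _ =>
        parseval (mul (b k) (b i))
    have hT2 : ∑ k, ∑ i, ∑ j, ⟪mul (b i) (b j), b k⟫ * ⟪mul (b i) (b j), b k⟫ = S := by
      rw [Finset.sum_comm]
      rw [hSdef]
      refine Finset.sum_congr rfl fun i _ => ?_
      rw [Finset.sum_comm]
      exact Finset.sum_congr rfl fun j _ => parseval (mul (b i) (b j))
    calc ∑ k, ⟪M (b k), b k⟫
        = ∑ k, (-(1/2) * ∑ i, ∑ j, ⟪mul (b k) (b i), b j⟫ * ⟪mul (b k) (b i), b j⟫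
          + (1/4) * ∑ i, ∑ j, ⟪mul (b i) (b j), b k⟫ * ⟪mul (b i) (b j), b k⟫) :=
          Finset.sum_congr rfl fun k _ => hM (b k) (b k)
      _ = -(1/2) * (∑ k, ∑ i, ∑ j, ⟪mul (b k) (b i), b j⟫ * ⟪mul (b k) (b i), b j⟫)
          + (1/4) * (∑ k, ∑ i, ∑ j, ⟪mul (b i) (b j), b k⟫ * ⟪mul (b i) (b j), b k⟫) := by
          rw [Finset.sum_add_distrib, Finset.mul_sum, Finset.mul_sum]
      _ = -(1/2) * S + (1/4) * S := by rw [hT1, hT2]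
      _ = -(1/4) * S := by ring
  -- trace of ⟨H, mul b_k b_k⟩
  have htrH : ∑ k, ⟪H, mul (b k) (b k)⟫ = ⟪H, H⟫ := by
    rw [← inner_sum, ← hH]
  -- sum the Einstein equation over the basis
  have htr : -(1/4) * S - (1/4) * ⟪H, H⟫ = c * (Fintype.card ι : ℝ) := by
    have h := fun k => heq (b k) (b k)
    have hsum : ∑ k, (⟪M (b k), b k⟫ - (1/4) * ⟪H, mul (b k) (b k)⟫)
        = ∑ k, c * ⟪b k, b k⟫ := Finset.sum_congr rfl fun k _ => h k
    rw [Finset.sum_sub_distrib, ← Finset.mul_sum, htrM, htrH] at hsum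
    rw [hsum]
    have hone : ∀ k : ι, ⟪b k, b k⟫ = (1 : ℝ) := fun k => by
      rw [real_inner_self_eq_norm_mul_norm, b.orthonormal.1 k]; norm_num
    simp only [hone, mul_one, Finset.sum_const, Finset.card_univ, nsmul_eq_mul]
    ring
  have hHH : 0 ≤ ⟪H, H⟫ := real_inner_self_nonneg
  have hcard : 0 < (Fintype.card ι : ℝ) := by
    obtain ⟨i₀, _, _⟩ := hbasis
    have : 0 < Fintype.card ι := Fintype.card_pos_iff.mpr ⟨i₀⟩
    exact_mod_cast this
  nlinarith
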